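/- Let M, M* ∈ ℝ^{n×n} be symmetric matrices, λ the largest eigenvalue of M with corresponding unit eigenvector u, λ* > 0 the largest eigenvalue of M*, u* ∈ ℝⁿ any vector, and u^{(−m)} ∈ ℝⁿ a vector for each m ∈ [n]. Suppose Δ₀ := ‖M − M*‖/λ* ≤ 1/2. Define r := (1/λ*)·( max_{m ∈ [n]} |M_{m:}(u^{(−m)} − u*)| + ‖M‖_{2→∞} · max_{m ∈ [n]} ‖u − u^{(−m)}‖₂ ). Then ‖u − Mu*/λ*‖_∞ ≤ 2Δ₀·‖Mu*‖_∞/λ* + 2r. -/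

import Mathlib

open MeasureTheory Filter Finset Matrix
open scoped ENNReal

namespace HPC

/-- Hyperedges: `d`-element subsets of `[n]`. -/
abbrev Edge (n d : ℕ) : Type := {e : Finset (Fin n) // e.card = d}

/-- A hyperedge configuration. -/
abbrev Config (n d : ℕ) : Type := Edge n d → Bool

instance {n : ℕ} : MeasurableSpace (Finset (Fin n)) := ⊤

/-- Bernoulli measure on `Bool` with success probability `p`. -/
noncomputable def bern (p : ℝ) : Measure Bool :=
  ENNReal.ofReal p • Measure.dirac true + ENNReal.ofReal (1 - p) • Measure.dirac false

/-- Law of the indicator of hyperedge `e` when the planted set is `S`: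
hyperedges inside `S` are present surely, the others with probability `p`. -/
noncomputable def edgeLaw (n d : ℕ) (p : ℝ) (S : Finset (Fin n)) (e : Edge n d) :
    Measure Bool :=
  if (e : Finset (Fin n)) ⊆ S then Measure.dirac true else bern p

/-- Conditional law of the configuration given the planted set `S`. -/
noncomputable def condLaw (n d : ℕ) (p : ℝ) (S : Finset (Fin n)) : Measure (Config n d) :=
  Measure.pi fun e => edgeLaw n d p S e

/-- Marginal law `P_k` of the configuration, the planted set being uniform of size `k`. -/
noncomputable def law (n d : ℕ) (p : ℝ) (k : ℕ) : Measure (Config n d) :=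
  (((univ : Finset (Finset (Fin n))).filter fun S => S.card = k).card : ℝ≥0∞)⁻¹ •
    ∑ S ∈ (univ : Finset (Finset (Fin n))).filter fun S => S.card = k, condLaw n d p S

/-- Joint law of the planted set (uniform of size `k`) and the configuration. -/
noncomputable def jointLaw (n d : ℕ) (p : ℝ) (k : ℕ) :
    Measure (Finset (Fin n) × Config n d) :=
  (((univ : Finset (Finset (Fin n))).filter fun S => S.card = k).card : ℝ≥0∞)⁻¹ •
    ∑ S ∈ (univ : Finset (Finset (Fin n))).filter fun S => S.card = k,
      Measure.map (fun H => (S, H)) (condLaw n d p S)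

/-- Adjacency matrix (pairwise co-occurrence counts) of a configuration. -/
noncomputable def adj (n d : ℕ) (H : Config n d) : Matrix (Fin n) (Fin n) ℝ :=
  Matrix.of fun i j =>
    if i = j then 0 else
      ∑ e : Edge n d,
        if i ∈ (e : Finset (Fin n)) ∧ j ∈ (e : Finset (Fin n)) ∧ H e = true then (1 : ℝ) else 0

/-- Null-model expectation `E₀[A]`. -/
noncomputable def expAdj (n d : ℕ) (p : ℝ) : Matrix (Fin n) (Fin n) ℝ :=
  Matrix.of fun i j => if i = j then 0 else ((n - 2).choose (d - 2) : ℝ) * p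

/-- Centered adjacency matrix `M = A − E₀[A]`. -/
noncomputable def centered (n d : ℕ) (p : ℝ) (H : Config n d) : Matrix (Fin n) (Fin n) ℝ :=
  adj n d H - expAdj n d p

/-- Spectral (ℓ²-operator) norm of a real square matrix. -/
noncomputable def specNorm {n : ℕ} (M : Matrix (Fin n) (Fin n) ℝ) : ℝ :=
  ‖LinearMap.toContinuousLinearMap (Matrix.toEuclideanLin M)‖

/-- Euclidean norm on `Fin n → ℝ`. -/
noncomputable def norm2 {n : ℕ} (v : Fin n → ℝ) : ℝ := Real.sqrt (∑ i, v i ^ 2)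

/-- Supremum norm on `Fin n → ℝ`. -/
noncomputable def normInf {n : ℕ} (v : Fin n → ℝ) : ℝ := ‖v‖

/-- Two-to-infinity norm: maximal Euclidean row norm. -/
noncomputable def norm2toInf {n : ℕ} (M : Matrix (Fin n) (Fin n) ℝ) : ℝ :=
  normInf fun i => norm2 (M i)

/-- `u` is a unit eigenvector of `M` for the eigenvalue `lam`, and `lam` is the
largest eigenvalue of `M`. -/
def IsTopEigenpair {n : ℕ} (M : Matrix (Fin n) (Fin n) ℝ) (lam : ℝ) (u : Fin n → ℝ) : Prop :=
  norm2 u = 1 ∧ M.mulVec u = lam • u ∧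
    ∀ (mu : ℝ) (v : Fin n → ℝ), v ≠ 0 → M.mulVec v = mu • v → mu ≤ lam

/-- `T` is a set of indices of `k` largest entries of `|u|` (ties broken arbitrarily). -/
def IsTopK {n : ℕ} (k : ℕ) (u : Fin n → ℝ) (T : Finset (Fin n)) : Prop :=
  T.card = k ∧ ∀ i ∈ T, ∀ j ∉ T, |u j| ≤ |u i|

/-- Normalized indicator vector `1_T / √|T|`. -/
noncomputable def uInd {n : ℕ} (T : Finset (Fin n)) : Fin n → ℝ :=
  fun i => if i ∈ T then (Real.sqrt T.card)⁻¹ else 0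

/-- Normalized indicator vector `1_S / √k`. -/
noncomputable def uStar {n : ℕ} (k : ℕ) (S : Finset (Fin n)) : Fin n → ℝ :=
  fun i => if i ∈ S then (Real.sqrt k)⁻¹ else 0

/-- `c_e(T) = |e ∩ T|·(|e ∩ T| − 1)`. -/
noncomputable def cE {n : ℕ} (e T : Finset (Fin n)) : ℝ :=
  ((e ∩ T).card : ℝ) * (((e ∩ T).card : ℝ) - 1)

/-- Co-membership matrix of a hyperedge. -/
noncomputable def coB {n : ℕ} (e : Finset (Fin n)) : Matrix (Fin n) (Fin n) ℝ :=
  Matrix.of fun i j => if i ≠ j ∧ i ∈ e ∧ j ∈ e then 1 else 0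

/-- `λ* = (1 − p)(k − 1)·C(k−2, d−2)`. -/
noncomputable def lamStar (d k : ℕ) (p : ℝ) : ℝ :=
  (1 - p) * ((k : ℝ) - 1) * ((k - 2).choose (d - 2) : ℝ)

noncomputable def wIn (n d k : ℕ) (p : ℝ) : ℝ :=
  ((k - 2).choose (d - 2) : ℝ) +
    p * (((n - 2).choose (d - 2) : ℝ) - ((k - 2).choose (d - 2) : ℝ))

noncomputable def wOut (n d : ℕ) (p : ℝ) : ℝ := p * ((n - 2).choose (d - 2) : ℝ)

/-- `M* = (w_in − w_out)·(1_S 1_Sᵀ − I_S)`, the conditional expectation `E_S[M]`. -/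
noncomputable def mStarOf (n d k : ℕ) (p : ℝ) (S : Finset (Fin n)) :
    Matrix (Fin n) (Fin n) ℝ :=
  Matrix.of fun i j =>
    (wIn n d k p - wOut n d p) *
      ((if i ∈ S then (1 : ℝ) else 0) * (if j ∈ S then 1 else 0) -
        if i = j ∧ i ∈ S then 1 else 0)

/-- Leave-one-out perturbation `B^{(m)} = Σ_{e ∋ m} (H_e − p)·B_e`. -/
noncomputable def bMat (n d : ℕ) (p : ℝ) (H : Config n d) (m : Fin n) :
    Matrix (Fin n) (Fin n) ℝ :=
  ∑ e : Edge n d,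
    if m ∈ (e : Finset (Fin n)) then
      ((if H e then (1 : ℝ) else 0) - p) • coB (e : Finset (Fin n))
    else 0

/-- `(lam, U)` is an orthonormal eigendecomposition of `A` with eigenvalues listed in
nonincreasing order. -/
def IsEigenDecomp {n : ℕ} (A : Matrix (Fin n) (Fin n) ℝ) (lam : Fin n → ℝ)
    (U : Fin n → Fin n → ℝ) : Prop :=
  (∀ i j, U i ⬝ᵥ U j = if i = j then (1 : ℝ) else 0) ∧
    (∀ i, A.mulVec (U i) = lam i • U i) ∧ Antitone lam

/-- Maximum of a real function over `Fin n`, `n > 0`. -/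
noncomputable def maxOver {n : ℕ} (hn : 0 < n) (f : Fin n → ℝ) : ℝ :=
  (univ : Finset (Fin n)).sup' ⟨⟨0, hn⟩, Finset.mem_univ _⟩ f

/-- `min_{i ≥ 2} |lam i − x|`, the minimum over non-leading indices. -/
noncomputable def minOffTop {n : ℕ} [NeZero n] (hn : 2 ≤ n) (lam : Fin n → ℝ) (x : ℝ) : ℝ :=
  ((univ : Finset (Fin n)).filter fun i => i ≠ 0).inf'
    ⟨⟨1, by omega⟩, by
      simp only [Finset.mem_filter, Finset.mem_univ, true_and, ne_eq]
      intro h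
      simpa using congrArg Fin.val h⟩
    fun i => |lam i - x|

end HPC

open HPC MeasureTheory Filter Finset Matrix
open scoped ENNReal Topology


section OneStepAux

open scoped RealInnerProductSpace

variable {n : ℕ}

lemma aux_norm2_eq (v : Fin n → ℝ) :
    norm2 v = ‖(WithLp.equiv 2 (Fin n → ℝ)).symm v‖ := by
  rw [EuclideanSpace.norm_eq]
  unfold norm2
  congr 1
  refine Finset.sum_congr rfl fun i _ => ?_
  rw [show ((WithLp.equiv 2 (Fin n → ℝ)).symm v).ofLp i = v i from rfl, Real.norm_eq_abs, sq_abs]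

lemma aux_dot_eq_inner (a b : Fin n → ℝ) :
    a ⬝ᵥ b = ⟪(WithLp.equiv 2 (Fin n → ℝ)).symm a, (WithLp.equiv 2 (Fin n → ℝ)).symm b⟫ := by
  rw [WithLp.equiv_symm_apply, EuclideanSpace.inner_toLp_toLp, star_trivial, dotProduct_comm]

lemma aux_dot_abs_le (a b : Fin n → ℝ) : |a ⬝ᵥ b| ≤ norm2 a * norm2 b := by
  rw [aux_dot_eq_inner, aux_norm2_eq, aux_norm2_eq]
  exact abs_real_inner_le_norm _ _

lemma aux_dot_toEuclidean (A : Matrix (Fin n) (Fin n) ℝ) (w : Fin n → ℝ) :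
    ⟪(WithLp.equiv 2 (Fin n → ℝ)).symm w,
      Matrix.toEuclideanLin A ((WithLp.equiv 2 (Fin n → ℝ)).symm w)⟫ = w ⬝ᵥ A.mulVec w := by
  rw [WithLp.equiv_symm_apply, Matrix.toEuclideanLin_toLp, EuclideanSpace.inner_toLp_toLp, star_trivial,
    Matrix.toLin'_apply, dotProduct_comm]

lemma aux_quad_le (A : Matrix (Fin n) (Fin n) ℝ) (w : Fin n → ℝ)
    (hw : norm2 w = 1) : |w ⬝ᵥ A.mulVec w| ≤ specNorm A := by
  set T := LinearMap.toContinuousLinearMap (Matrix.toEuclideanLin A) with hT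
  set W := (WithLp.equiv 2 (Fin n → ℝ)).symm w with hWdef
  have hWnorm : ‖W‖ = 1 := by rw [hWdef, ← aux_norm2_eq]; exact hw
  have hTapp : Matrix.toEuclideanLin A W = T W :=
    congrFun (LinearMap.coe_toContinuousLinearMap' (Matrix.toEuclideanLin A)).symm W
  rw [← aux_dot_toEuclidean A w, ← hWdef, hTapp]
  calc |⟪W, T W⟫| ≤ ‖W‖ * ‖T W‖ := abs_real_inner_le_norm _ _
    _ ≤ ‖W‖ * (‖T‖ * ‖W‖) :=
        mul_le_mul_of_nonneg_left (T.le_opNorm W) (norm_nonneg _)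
    _ = specNorm A := by rw [hWnorm, specNorm, ← hT]; ring

lemma aux_parseval (b : OrthonormalBasis (Fin n) ℝ (EuclideanSpace ℝ (Fin n)))
    (W : EuclideanSpace ℝ (Fin n)) : ∑ i, ⟪b i, W⟫ ^ 2 = ‖W‖ ^ 2 := by
  have h2 := b.sum_inner_mul_inner W W
  rw [real_inner_self_eq_norm_sq] at h2
  rw [← h2]
  refine Finset.sum_congr rfl fun i _ => ?_
  rw [real_inner_comm W (b i)]
  ring

lemma aux_inner_T {A : Matrix (Fin n) (Fin n) ℝ} (hH : A.IsHermitian)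
    (W : EuclideanSpace ℝ (Fin n)) :
    ⟪W, Matrix.toEuclideanLin A W⟫
      = ∑ i, hH.eigenvalues i * ⟪hH.eigenvectorBasis i, W⟫ ^ 2 := by
  have hsymm : (Matrix.toEuclideanLin A).IsSymmetric :=
    Matrix.isHermitian_iff_isSymmetric.mp hH
  have hTb : ∀ i, Matrix.toEuclideanLin A (hH.eigenvectorBasis i)
      = hH.eigenvalues i • hH.eigenvectorBasis i := by
    intro i
    apply (WithLp.equiv 2 (Fin n → ℝ)).injective
    show A *ᵥ (hH.eigenvectorBasis i).ofLp = (hH.eigenvalues i • hH.eigenvectorBasis i).ofLp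
    rw [WithLp.ofLp_smul]
    exact hH.mulVec_eigenvectorBasis i
  rw [← hH.eigenvectorBasis.sum_inner_mul_inner W (Matrix.toEuclideanLin A W)]
  refine Finset.sum_congr rfl fun i _ => ?_
  have h1 : ⟪hH.eigenvectorBasis i, Matrix.toEuclideanLin A W⟫
      = hH.eigenvalues i * ⟪hH.eigenvectorBasis i, W⟫ := by
    rw [← hsymm (hH.eigenvectorBasis i) W, hTb i, real_inner_smul_left]
  rw [h1, real_inner_comm W (hH.eigenvectorBasis i)]
  ring

lemma aux_rayleigh_le {A : Matrix (Fin n) (Fin n) ℝ} (hA : A.IsSymm)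
    {μ : ℝ} {v : Fin n → ℝ} (h : IsTopEigenpair A μ v) (w : Fin n → ℝ)
    (hw : norm2 w = 1) : w ⬝ᵥ A.mulVec w ≤ μ := by
  have hH : A.IsHermitian := by
    rwa [Matrix.IsHermitian, Matrix.conjTranspose_eq_transpose_of_trivial]
  have hle : ∀ i, hH.eigenvalues i ≤ μ := by
    intro i
    refine h.2.2 (hH.eigenvalues i) (hH.eigenvectorBasis i) (fun h0 => ?_)
      (hH.mulVec_eigenvectorBasis i)
    have hb1 : ‖hH.eigenvectorBasis i‖ = 1 := hH.eigenvectorBasis.orthonormal.1 i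
    have hz : (hH.eigenvectorBasis i : EuclideanSpace ℝ (Fin n)) = 0 := by simpa using congrArg (WithLp.toLp 2) h0
    rw [hz, norm_zero] at hb1
    norm_num at hb1
  set W := (WithLp.equiv 2 (Fin n → ℝ)).symm w with hWdef
  have hWnorm : ‖W‖ = 1 := by rw [hWdef, ← aux_norm2_eq]; exact hw
  rw [← aux_dot_toEuclidean A w, ← hWdef, aux_inner_T hH W]
  calc ∑ i, hH.eigenvalues i * ⟪hH.eigenvectorBasis i, W⟫ ^ 2
      ≤ ∑ i, μ * ⟪hH.eigenvectorBasis i, W⟫ ^ 2 :=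
        Finset.sum_le_sum fun i _ => mul_le_mul_of_nonneg_right (hle i) (sq_nonneg _)
    _ = μ := by
        rw [← Finset.mul_sum, aux_parseval hH.eigenvectorBasis W, hWnorm]
        norm_num

lemma aux_norm2_one {v : Fin n → ℝ} (hv : norm2 v = 1) : v ⬝ᵥ v = 1 := by
  have h1 : ∑ i, v i ^ 2 = 1 := by
    have h2 := hv
    rw [norm2, Real.sqrt_eq_one] at h2
    exact h2
  rw [show v ⬝ᵥ v = ∑ i, v i ^ 2 from Finset.sum_congr rfl fun i _ => (sq (v i)).symm]
  exact h1

end OneStepAux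

set_option maxHeartbeats 1000000 in
/-- **One-step proxy bound.** If `Δ₀ = ‖M − M*‖/λ* ≤ 1/2`, then
`‖u − Mu*/λ*‖_∞ ≤ 2Δ₀ ‖Mu*‖_∞/λ* + 2r`. -/
theorem one_step_proxy_bound (n : ℕ) (hn : 0 < n)
    (M Mstar : Matrix (Fin n) (Fin n) ℝ) (hM : M.IsSymm) (hMstar : Mstar.IsSymm)
    (lam lamstar : ℝ) (u : Fin n → ℝ)
    (hu : IsTopEigenpair M lam u)
    (hlamstar_pos : 0 < lamstar)
    (hlamstar : ∃ w : Fin n → ℝ, IsTopEigenpair Mstar lamstar w)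
    (ustar : Fin n → ℝ) (um : Fin n → Fin n → ℝ)
    (hΔ : specNorm (M - Mstar) / lamstar ≤ 1 / 2) :
    normInf (u - lamstar⁻¹ • M.mulVec ustar)
      ≤ 2 * (specNorm (M - Mstar) / lamstar) * (normInf (M.mulVec ustar) / lamstar)
        + 2 * (lamstar⁻¹ *
            (maxOver hn (fun m => |M m ⬝ᵥ (um m - ustar)|)
              + norm2toInf M * maxOver hn (fun m => norm2 (u - um m)))) := by
  classical
  have hne : Nonempty (Fin n) := ⟨⟨0, hn⟩⟩
  obtain ⟨wst, hwst⟩ := hlamstar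
  set Δ := specNorm (M - Mstar) with hΔdef
  have hΔ0 : 0 ≤ Δ := norm_nonneg _
  have hΔle : 2 * Δ ≤ lamstar := by
    rw [div_le_div_iff₀ hlamstar_pos (by norm_num : (0:ℝ) < 2)] at hΔ
    linarith
  have hu1 : norm2 u = 1 := hu.1
  have huu : u ⬝ᵥ u = 1 := aux_norm2_one hu1
  have hwu : wst ⬝ᵥ wst = 1 := aux_norm2_one hwst.1
  have hlam_eq : u ⬝ᵥ M.mulVec u = lam := by
    rw [hu.2.1, dotProduct_smul, smul_eq_mul, huu, mul_one]
  have hlamst_eq : wst ⬝ᵥ Mstar.mulVec wst = lamstar := by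
    rw [hwst.2.1, dotProduct_smul, smul_eq_mul, hwu, mul_one]
  have hq1 : |u ⬝ᵥ (M - Mstar).mulVec u| ≤ Δ := aux_quad_le _ _ hu1
  have hq2 : |wst ⬝ᵥ (M - Mstar).mulVec wst| ≤ Δ := aux_quad_le _ _ hwst.1
  have hsub1 : u ⬝ᵥ (M - Mstar).mulVec u = lam - u ⬝ᵥ Mstar.mulVec u := by
    rw [Matrix.sub_mulVec, dotProduct_sub, hlam_eq]
  have hsub2 : wst ⬝ᵥ (M - Mstar).mulVec wst = wst ⬝ᵥ M.mulVec wst - lamstar := by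
    rw [Matrix.sub_mulVec, dotProduct_sub, hlamst_eq]
  have hr1 : u ⬝ᵥ Mstar.mulVec u ≤ lamstar := aux_rayleigh_le hMstar hwst u hu1
  have hr2 : wst ⬝ᵥ M.mulVec wst ≤ lam := aux_rayleigh_le hM hu wst hwst.1
  have hq1' := abs_le.mp hq1
  have hq2' := abs_le.mp hq2
  have hup : lam ≤ lamstar + Δ := by
    rw [hsub1] at hq1'; linarith [hq1'.2]
  have hlow : lamstar ≤ lam + Δ := by
    rw [hsub2] at hq2'; linarith [hq2'.1]
  have hlam_half : lamstar / 2 ≤ lam := by linarith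
  have hlam_pos : 0 < lam := by linarith
  have habs : |lamstar - lam| ≤ Δ := by
    rw [abs_le]; constructor <;> linarith
  set N := normInf (M.mulVec ustar) with hNdef
  set R1 := maxOver hn (fun m => |M m ⬝ᵥ (um m - ustar)|) with hR1def
  set R2 := maxOver hn (fun m => norm2 (u - um m)) with hR2def
  set K := norm2toInf M with hKdef
  have hN0 : 0 ≤ N := norm_nonneg _
  have hK0 : 0 ≤ K := norm_nonneg _
  have hR10 : 0 ≤ R1 := by
    refine le_trans (abs_nonneg (M (⟨0, hn⟩ : Fin n) ⬝ᵥ (um (⟨0, hn⟩ : Fin n) - ustar))) ?_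
    exact Finset.le_sup' (fun m => |M m ⬝ᵥ (um m - ustar)|) (Finset.mem_univ (⟨0, hn⟩ : Fin n))
  have hR20 : 0 ≤ R2 := by
    have h0 : (0:ℝ) ≤ norm2 (u - um (⟨0, hn⟩ : Fin n)) := Real.sqrt_nonneg _
    exact le_trans h0 (Finset.le_sup' (fun m => norm2 (u - um m)) (Finset.mem_univ (⟨0, hn⟩ : Fin n)))
  have hR0 : 0 ≤ R1 + K * R2 := by positivity
  have hfrac : 2 * Δ / lamstar ^ 2 ≤ lamstar⁻¹ := by
    rw [div_le_iff₀ (by positivity : (0:ℝ) < lamstar ^ 2)]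
    have h3 : lamstar⁻¹ * lamstar ^ 2 = lamstar := by
      field_simp
    rw [h3]; exact hΔle
  have hinv : |lam⁻¹ - lamstar⁻¹| ≤ 2 * Δ / lamstar ^ 2 := by
    have he : lam⁻¹ - lamstar⁻¹ = (lamstar - lam) / (lam * lamstar) := by
      field_simp
    rw [he, abs_div, abs_of_pos (mul_pos hlam_pos hlamstar_pos)]
    have hden : lamstar ^ 2 / 2 ≤ lam * lamstar := by nlinarith
    calc |lamstar - lam| / (lam * lamstar) ≤ Δ / (lamstar ^ 2 / 2) :=
          div_le_div₀ hΔ0 habs (by positivity) hden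
      _ = 2 * Δ / lamstar ^ 2 := by
          field_simp
  show ‖u - lamstar⁻¹ • M.mulVec ustar‖ ≤ _
  rw [pi_norm_le_iff_of_nonempty]
  intro m
  rw [Real.norm_eq_abs]
  set a := M.mulVec u m with hadef
  set astar := M.mulVec ustar m with hastardef
  have hum : u m = lam⁻¹ * a := by
    have h4 := congrFun hu.2.1 m
    rw [Pi.smul_apply, smul_eq_mul] at h4
    rw [hadef, h4, inv_mul_cancel_left₀ hlam_pos.ne']
  have hdiff : a - astar = M m ⬝ᵥ (u - um m) + M m ⬝ᵥ (um m - ustar) := by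
    have h1 : a = M m ⬝ᵥ u := rfl
    have h2 : astar = M m ⬝ᵥ ustar := rfl
    rw [h1, h2, ← dotProduct_add, sub_add_sub_cancel, dotProduct_sub]
  have hMm : norm2 (M m) ≤ K := by
    refine le_trans (le_abs_self _) ?_
    exact norm_le_pi_norm (fun i => norm2 (M i)) m
  have hd1 : |M m ⬝ᵥ (u - um m)| ≤ K * R2 := by
    refine le_trans (aux_dot_abs_le _ _) ?_
    refine mul_le_mul hMm ?_ (Real.sqrt_nonneg _) hK0
    exact Finset.le_sup' (fun m => norm2 (u - um m)) (Finset.mem_univ m)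
  have hd2 : |M m ⬝ᵥ (um m - ustar)| ≤ R1 :=
    Finset.le_sup' (fun m => |M m ⬝ᵥ (um m - ustar)|) (Finset.mem_univ m)
  have hAdiff : |a - astar| ≤ R1 + K * R2 := by
    rw [hdiff]
    refine le_trans (abs_add_le _ _) ?_
    linarith
  have hastar : |astar| ≤ N := by
    refine le_trans (le_of_eq (Real.norm_eq_abs astar).symm) ?_
    exact norm_le_pi_norm (M.mulVec ustar) m
  have ha : |a| ≤ N + (R1 + K * R2) := by
    have h5 : a = astar + (a - astar) := by ring
    calc |a| = |astar + (a - astar)| := by rw [← h5]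
      _ ≤ |astar| + |a - astar| := abs_add_le _ _
      _ ≤ N + (R1 + K * R2) := add_le_add hastar hAdiff
  have hentry : (u - lamstar⁻¹ • M.mulVec ustar) m
      = a * (lam⁻¹ - lamstar⁻¹) + lamstar⁻¹ * (a - astar) := by
    simp only [Pi.sub_apply, Pi.smul_apply, smul_eq_mul]
    rw [hum]
    ring
  rw [hentry]
  have hbound : |a * (lam⁻¹ - lamstar⁻¹) + lamstar⁻¹ * (a - astar)|
      ≤ (N + (R1 + K * R2)) * (2 * Δ / lamstar ^ 2) + lamstar⁻¹ * (R1 + K * R2) := by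
    refine le_trans (abs_add_le _ _) ?_
    rw [abs_mul, abs_mul, abs_of_pos (inv_pos.mpr hlamstar_pos)]
    refine add_le_add ?_ (mul_le_mul_of_nonneg_left hAdiff (by positivity)) 
    exact mul_le_mul ha hinv (abs_nonneg _) (by positivity)
  refine le_trans hbound ?_
  have hRHSeq : 2 * (Δ / lamstar) * (N / lamstar) = N * (2 * Δ / lamstar ^ 2) := by
    field_simp
  have hkey : (R1 + K * R2) * (2 * Δ / lamstar ^ 2) ≤ (R1 + K * R2) * lamstar⁻¹ :=
    mul_le_mul_of_nonneg_left hfrac hR0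
  rw [hRHSeq]
  linarith
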